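/- arXiv:1012.5447 — 6 statements merged into one kernel-verified Lean document; each statement's English description precedes it below -/
import Mathlib

section
/- A non-decreasing sequence of integers B = [b_1, b_2, ..., b_n] is the imbalance sequence of some r-digraph if and only if for every k with 1 ≤ k ≤ n, the partial sum b_1 + ... + b_k ≥ r·k·(k−n), with equality when k = n. -/
open Finset

/-- An `r`-digraph on `n` vertices: `A i j` is the number of arcs from `i` to `j`;
no loops, and at most `r` arcs (both directions counted) between any two distinct vertices. -/
def IsRDigraph (n r : ℕ) (A : Fin n → Fin n → ℕ) : Prop :=
  (∀ i, A i i = 0) ∧ ∀ i j, i ≠ j → A i j + A j i ≤ r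

/-- Imbalance of a vertex: outdegree minus indegree. -/
def imbalance {n : ℕ} (A : Fin n → Fin n → ℕ) (v : Fin n) : ℤ :=
  (∑ j, (A v j : ℤ)) - ∑ j, (A j v : ℤ)

/-- `b` lists the vertex imbalances of `A` (in some order given by a permutation). -/
def IsImbalanceSeq (n r : ℕ) (A : Fin n → Fin n → ℕ) (b : Fin n → ℤ) : Prop :=
  IsRDigraph n r A ∧ ∃ σ : Equiv.Perm (Fin n), ∀ i, b i = imbalance A (σ i)

/-- Sum of the first `k` entries of `b`. -/
def psum {n : ℕ} (b : Fin n → ℤ) (k : ℕ) : ℤ :=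
  ∑ i ∈ Finset.univ.filter (fun i : Fin n => (i : ℕ) < k), b i

namespace Stmt0Aux

variable {n : ℕ}

/-- Walks of given length in a relation. -/
def Walk (res : Fin n → Fin n → Prop) : ℕ → Fin n → Fin n → Prop
  | 0, u, v => u = v
  | l+1, u, v => ∃ w, res u w ∧ Walk res l w v

lemma walk_mono {res res' : Fin n → Fin n → Prop} (h : ∀ x y, res x y → res' x y) :
    ∀ l u v, Walk res l u v → Walk res' l u v := by
  intro l
  induction l with
  | zero => intro u v hw; exact hw
  | succ l ih =>
      rintro u v ⟨w, hw, hwalk⟩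
      exact ⟨w, h _ _ hw, ih _ _ hwalk⟩

lemma walk_append {res : Fin n → Fin n → Prop} :
    ∀ l u w, Walk res l u w → ∀ v, res w v → Walk res (l+1) u v := by
  intro l
  induction l with
  | zero => intro u w hw v hres; cases hw; exact ⟨v, hres, rfl⟩
  | succ l ih =>
      rintro u w ⟨x, hx, hwalk⟩ v hres
      exact ⟨x, hx, ih _ _ hwalk _ hres⟩

lemma rtg_walk {res : Fin n → Fin n → Prop} {u v : Fin n}
    (h : Relation.ReflTransGen res u v) : ∃ l, Walk res l u v := by
  induction h with
  | refl => exact ⟨0, rfl⟩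
  | tail _ hst ih =>
      obtain ⟨l, hl⟩ := ih
      exact ⟨l + 1, walk_append l _ _ hl _ hst⟩

/-- Either a walk avoids `u` as a source, or there is a walk from `u` to `v` of length ≤ l. -/
lemma walk_avoid {res : Fin n → Fin n → Prop} (u v : Fin n) :
    ∀ l w, Walk res l w v →
      Walk (fun x y => res x y ∧ x ≠ u) l w v ∨ ∃ m ≤ l, Walk res m u v := by
  intro l
  induction l with
  | zero => intro w hw; exact Or.inl hw
  | succ l ih =>
      rintro w ⟨x, hx, hwalk⟩
      by_cases hwu : w = u
      · subst hwu; exact Or.inr ⟨l + 1, le_rfl, ⟨x, hx, hwalk⟩⟩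
      · rcases ih _ hwalk with h | ⟨m, hm, hw⟩
        · exact Or.inl ⟨x, ⟨hx, hwu⟩, h⟩
        · exact Or.inr ⟨m, le_trans hm (Nat.le_succ l), hw⟩


variable {n : ℕ}

def rowsum (c : Fin n → Fin n → ℤ) (x : Fin n) : ℤ := ∑ y, c x y

def Valid (n r : ℕ) (c : Fin n → Fin n → ℤ) : Prop :=
  (∀ x y, c y x = - c x y) ∧ ∀ x y, c x y ≤ (r : ℤ)

def ex (b : Fin n → ℤ) (c : Fin n → Fin n → ℤ) (x : Fin n) : ℤ := b x - rowsum c x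

def Phi (b : Fin n → ℤ) (c : Fin n → Fin n → ℤ) : ℕ := ∑ x, (ex b c x).natAbs

def Res (r : ℕ) (c : Fin n → Fin n → ℤ) (x y : Fin n) : Prop := c x y < (r : ℤ)

def push (c : Fin n → Fin n → ℤ) (u w : Fin n) : Fin n → Fin n → ℤ :=
  fun x y => c x y + (if x = u ∧ y = w then 1 else 0) - (if x = w ∧ y = u then 1 else 0)

lemma sum_antisym_zero {c : Fin n → Fin n → ℤ} (h : ∀ x y, c y x = - c x y)
    (S : Finset (Fin n)) : ∑ x ∈ S, ∑ y ∈ S, c x y = 0 := by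
  have h1 : ∑ x ∈ S, ∑ y ∈ S, c x y = ∑ y ∈ S, ∑ x ∈ S, c x y := Finset.sum_comm
  have h2 : ∑ y ∈ S, ∑ x ∈ S, c x y = ∑ y ∈ S, ∑ x ∈ S, (- c y x) := by
    apply Finset.sum_congr rfl; intro y _; apply Finset.sum_congr rfl; intro x _
    rw [h]
  have h3 : ∑ y ∈ S, ∑ x ∈ S, (- c y x) = - ∑ y ∈ S, ∑ x ∈ S, c y x := by
    simp [Finset.sum_neg_distrib]
  have := h1.trans (h2.trans h3)
  linarith

lemma push_valid {r : ℕ} {c : Fin n → Fin n → ℤ} (hv : Valid n r c) {u w : Fin n}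
    (huw : u ≠ w) (hres : c u w < (r : ℤ)) : Valid n r (push c u w) := by
  obtain ⟨ha, hb⟩ := hv
  constructor
  · intro x y
    simp only [push]
    rw [ha x y]
    have : (x = u ∧ y = w) ↔ (y = w ∧ x = u) := and_comm
    have : (y = u ∧ x = w) ↔ (x = w ∧ y = u) := and_comm
    by_cases h1 : x = u ∧ y = w <;> by_cases h2 : x = w ∧ y = u <;>
      simp [h1, h2, and_comm] <;> ring
  · intro x y
    simp only [push]
    by_cases h1 : x = u ∧ y = w
    · have h2 : ¬ (x = w ∧ y = u) := by
        rintro ⟨hw', hu'⟩; exact huw (h1.1 ▸ hw' ▸ rfl)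
      simp only [h1, h2, if_true, if_false]
      omega
    · simp only [h1, if_false]
      by_cases h2 : x = w ∧ y = u
      · obtain ⟨rfl, rfl⟩ := h2
        have := hb x y
        simp
        omega
      · have := hb x y
        simp [h2]
        omega

lemma rowsum_push {c : Fin n → Fin n → ℤ} {u w : Fin n} (huw : u ≠ w) (x : Fin n) :
    rowsum (push c u w) x = rowsum c x + (if x = u then 1 else 0) - (if x = w then 1 else 0) := by
  unfold rowsum push
  rw [Finset.sum_sub_distrib, Finset.sum_add_distrib]
  congr 1
  · congr 1
    have : ∀ y : Fin n, (if x = u ∧ y = w then (1:ℤ) else 0) = if y = w then (if x = u then 1 else 0) else 0 := by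
      intro y; by_cases h1 : x = u <;> by_cases h2 : y = w <;> simp [h1, h2]
    rw [Finset.sum_congr rfl fun y _ => this y]
    simp
  · have : ∀ y : Fin n, (if x = w ∧ y = u then (1:ℤ) else 0) = if y = u then (if x = w then 1 else 0) else 0 := by
      intro y; by_cases h1 : x = w <;> by_cases h2 : y = u <;> simp [h1, h2]
    rw [Finset.sum_congr rfl fun y _ => this y]
    simp

lemma ex_push {b : Fin n → ℤ} {c : Fin n → Fin n → ℤ} {u w : Fin n} (huw : u ≠ w) (x : Fin n) :
    ex b (push c u w) x = ex b c x - (if x = u then 1 else 0) + (if x = w then 1 else 0) := by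
  unfold ex
  rw [rowsum_push huw]
  ring

lemma sum_split_pair {β : Type*} [AddCommMonoid β] {u w : Fin n} (huw : u ≠ w) (f : Fin n → β) :
    ∑ x, f x = f u + f w + ∑ x ∈ (Finset.univ.erase u).erase w, f x := by
  rw [← Finset.add_sum_erase Finset.univ f (Finset.mem_univ u)]
  rw [← Finset.add_sum_erase (Finset.univ.erase u) f
      (Finset.mem_erase.mpr ⟨Ne.symm huw, Finset.mem_univ w⟩)]
  rw [add_assoc]

lemma phi_split {b : Fin n → ℤ} {c c' : Fin n → Fin n → ℤ} {u w : Fin n} (huw : u ≠ w)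
    (h : ∀ x, x ≠ u → x ≠ w → ex b c' x = ex b c x) :
    (Phi b c' : ℤ) - Phi b c =
      ((ex b c' u).natAbs : ℤ) + (ex b c' w).natAbs
        - (ex b c u).natAbs - (ex b c w).natAbs := by
  unfold Phi
  rw [sum_split_pair huw (fun x => ((ex b c' x).natAbs)),
      sum_split_pair huw (fun x => ((ex b c x).natAbs))]
  have htail : ∑ x ∈ (Finset.univ.erase u).erase w, ((ex b c' x).natAbs) =
      ∑ x ∈ (Finset.univ.erase u).erase w, ((ex b c x).natAbs) := by
    apply Finset.sum_congr rfl
    intro x hx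
    rw [Finset.mem_erase, Finset.mem_erase] at hx
    rw [h x hx.2.1 hx.1]
  rw [htail]
  push_cast
  ring

lemma augment {r : ℕ} (hr : 1 ≤ r) (b : Fin n → ℤ) :
    ∀ l (c : Fin n → Fin n → ℤ), Valid n r c → ∀ u v : Fin n,
      0 < ex b c u → ex b c v < 0 → Walk (Res r c) l u v →
      ∃ c', Valid n r c' ∧ Phi b c' < Phi b c := by
  intro l
  induction l using Nat.strong_induction_on with
  | _ l ih =>
  intro c hv u v hu hvneg hwalk
  by_cases hshort : ∃ l' < l, ∃ u' v', 0 < ex b c u' ∧ ex b c v' < 0 ∧ Walk (Res r c) l' u' v'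
  · obtain ⟨l', hl', u', v', h1, h2, h3⟩ := hshort
    exact ih l' hl' c hv u' v' h1 h2 h3
  · match l, hwalk with
    | 0, hwalk =>
        exact absurd hwalk (by intro h; rw [Walk] at h; subst h; omega)
    | l + 1, hwalk =>
    obtain ⟨w, hres, htail⟩ := hwalk
    have hwu : w ≠ u := by
      rintro rfl
      exact hshort ⟨l, Nat.lt_succ_self l, w, v, hu, hvneg, htail⟩
    have huw : u ≠ w := Ne.symm hwu
    set c' := push c u w with hc'
    have hv' : Valid n r c' := push_valid hv huw hres
    have heu : ex b c' u = ex b c u - 1 := by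
      rw [hc', ex_push huw]; simp [huw]
    have hew : ex b c' w = ex b c w + 1 := by
      rw [hc', ex_push huw]; simp [hwu]
    have hother : ∀ x, x ≠ u → x ≠ w → ex b c' x = ex b c x := by
      intro x h1 h2
      rw [hc', ex_push huw]; simp [h1, h2]
    by_cases hewneg : ex b c w < 0
    · refine ⟨c', hv', ?_⟩
      have := phi_split huw hother
      have h1 : ((ex b c' u).natAbs : ℤ) = (ex b c u).natAbs - 1 := by
        rw [heu]; omega
      have h2 : ((ex b c' w).natAbs : ℤ) = (ex b c w).natAbs - 1 := by
        rw [hew]; omega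
      omega
    · push_neg at hewneg
      have hvu : v ≠ u := by rintro rfl; omega
      have hvw : v ≠ w := by rintro rfl; omega
      have hphieq : Phi b c' = Phi b c := by
        have := phi_split huw hother
        have h1 : ((ex b c' u).natAbs : ℤ) = (ex b c u).natAbs - 1 := by
          rw [heu]; omega
        have h2 : ((ex b c' w).natAbs : ℤ) = (ex b c w).natAbs + 1 := by
          rw [hew]; omega
        omega
      rcases walk_avoid u v l w htail with havoid | ⟨m, hm, hwalk'⟩
      · have hsub : ∀ x y, (Res r c x y ∧ x ≠ u) → Res r c' x y := by
          rintro x y ⟨hxy, hxu⟩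
          unfold Res at hxy ⊢
          have hb2 := hv.2 x y
          rw [hc']
          unfold push
          have h1 : ¬ (x = u ∧ y = w) := by rintro ⟨rfl, _⟩; exact hxu rfl
          by_cases h2 : x = w ∧ y = u
          · obtain ⟨rfl, rfl⟩ := h2
            simp only [h1, and_self, if_true, if_false]
            omega
          · simp only [h1, h2, if_false]; omega
        have hwalk' : Walk (Res r c') l w v := walk_mono hsub l w v havoid
        obtain ⟨c'', hc''v, hc''p⟩ :=
          ih l (Nat.lt_succ_self l) c' hv' w v (by omega) (by rw [hother v hvu hvw]; exact hvneg) hwalk'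
        exact ⟨c'', hc''v, by omega⟩
      · exact absurd ⟨m, by omega, u, v, hu, hvneg, hwalk'⟩ hshort

lemma exists_neg_walk {r : ℕ} (b : Fin n → ℤ)
    (hub : ∀ S : Finset (Fin n), ∑ i ∈ S, b i ≤ (r : ℤ) * S.card * ((n : ℤ) - S.card))
    (c : Fin n → Fin n → ℤ) (hv : Valid n r c) (u : Fin n) (hu : 0 < ex b c u) :
    ∃ v l, ex b c v < 0 ∧ Walk (Res r c) l u v := by
  classical
  by_contra hcon
  push_neg at hcon
  set R : Finset (Fin n) := Finset.univ.filter (fun y => Relation.ReflTransGen (Res r c) u y)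
    with hR
  have huR : u ∈ R := by
    rw [hR, Finset.mem_filter]; exact ⟨Finset.mem_univ u, Relation.ReflTransGen.refl⟩
  have hnonneg : ∀ x ∈ R, 0 ≤ ex b c x := by
    intro x hx
    rw [hR, Finset.mem_filter] at hx
    by_contra hneg
    push_neg at hneg
    obtain ⟨l, hl⟩ := rtg_walk hx.2
    exact absurd hl (hcon x l hneg)
  have hcross : ∀ x ∈ R, ∀ y, y ∉ R → c x y = (r : ℤ) := by
    intro x hx y hy
    refine le_antisymm (hv.2 x y) ?_
    by_contra hlt
    push_neg at hlt
    apply hy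
    rw [hR, Finset.mem_filter] at hx ⊢
    exact ⟨Finset.mem_univ y, hx.2.tail hlt⟩
  have hsplit : ∑ x ∈ R, b x = ∑ x ∈ R, ex b c x + ∑ x ∈ R, rowsum c x := by
    rw [← Finset.sum_add_distrib]
    apply Finset.sum_congr rfl
    intro x _
    unfold ex; ring
  have hrowsum : ∑ x ∈ R, rowsum c x = (r : ℤ) * R.card * Rᶜ.card := by
    unfold rowsum
    have h1 : ∀ x ∈ R, ∑ y, c x y = ∑ y ∈ R, c x y + ∑ y ∈ Rᶜ, c x y := by
      intro x _
      rw [Finset.sum_add_sum_compl]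
    rw [Finset.sum_congr rfl h1, Finset.sum_add_distrib, sum_antisym_zero hv.1 R, zero_add]
    have h2 : ∀ x ∈ R, ∑ y ∈ Rᶜ, c x y = (r : ℤ) * Rᶜ.card := by
      intro x hx
      rw [Finset.sum_congr rfl (fun y hy => hcross x hx y (Finset.mem_compl.mp hy))]
      rw [Finset.sum_const, nsmul_eq_mul, mul_comm]
    rw [Finset.sum_congr rfl h2, Finset.sum_const, nsmul_eq_mul]
    ring
  have hexsum : (1 : ℤ) ≤ ∑ x ∈ R, ex b c x := by
    rw [← Finset.add_sum_erase R (ex b c) huR]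
    have h0 : (0:ℤ) ≤ ∑ x ∈ R.erase u, ex b c x :=
      Finset.sum_nonneg fun x hx => hnonneg x (Finset.mem_of_mem_erase hx)
    omega
  have hcard : (Rᶜ.card : ℤ) = (n : ℤ) - R.card := by
    have := Finset.card_compl R
    have h2 : R.card ≤ Fintype.card (Fin n) := Finset.card_le_univ R
    rw [Fintype.card_fin] at this h2
    omega
  have := hub R
  rw [hsplit, hrowsum, hcard] at *
  nlinarith [hexsum, hub R]

lemma flow_exists {r : ℕ} (hr : 1 ≤ r) (b : Fin n → ℤ)
    (hub : ∀ S : Finset (Fin n), ∑ i ∈ S, b i ≤ (r : ℤ) * S.card * ((n : ℤ) - S.card))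
    (hsum : ∑ x, b x = 0) :
    ∃ c, Valid n r c ∧ ∀ x, rowsum c x = b x := by
  classical
  suffices h : ∀ N (c : Fin n → Fin n → ℤ), Valid n r c → Phi b c ≤ N →
      ∃ c', Valid n r c' ∧ ∀ x, rowsum c' x = b x by
    refine h (Phi b (fun _ _ => 0)) (fun _ _ => 0) ⟨by simp, fun x y => by positivity⟩ le_rfl
  intro N
  induction N with
  | zero =>
      intro c hv hphi
      refine ⟨c, hv, fun x => ?_⟩
      have h0 : (ex b c x).natAbs = 0 := by
        have h1 : (ex b c x).natAbs ≤ Phi b c := by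
          unfold Phi
          exact Finset.single_le_sum (f := fun y => (ex b c y).natAbs) (fun y _ => Nat.zero_le _) (Finset.mem_univ x)
        omega
      have : ex b c x = 0 := by omega
      unfold ex at this; omega
  | succ N ihN =>
      intro c hv hphi
      by_cases hzero : Phi b c = 0
      · refine ⟨c, hv, fun x => ?_⟩
        have h0 : (ex b c x).natAbs = 0 := by
          have h1 : (ex b c x).natAbs ≤ Phi b c := by
            unfold Phi
            exact Finset.single_le_sum (f := fun y => (ex b c y).natAbs) (fun y _ => Nat.zero_le _) (Finset.mem_univ x)
          omega
        have : ex b c x = 0 := by omega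
        unfold ex at this; omega
      · have hsume : ∑ x, ex b c x = 0 := by
          unfold ex
          rw [Finset.sum_sub_distrib, hsum]
          have : ∑ x, rowsum c x = 0 := sum_antisym_zero hv.1 Finset.univ
          omega
        have hexpos : ∃ u, 0 < ex b c u := by
          by_contra hno
          push_neg at hno
          have hall : ∀ x ∈ Finset.univ, ex b c x = 0 := by
            intro x _
            have h2 : ∀ y ∈ Finset.univ, 0 ≤ - ex b c y := fun y _ => by
              have := hno y; omega
            have h3 : ∑ y, (- ex b c y) = 0 := by
              rw [Finset.sum_neg_distrib, hsume]; ring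
            have := (Finset.sum_eq_zero_iff_of_nonneg h2).mp h3 x (Finset.mem_univ x)
            omega
          apply hzero
          unfold Phi
          apply Finset.sum_eq_zero
          intro x hx
          rw [hall x hx]
          rfl
        obtain ⟨u, hu⟩ := hexpos
        obtain ⟨v, l, hvneg, hwalk⟩ := exists_neg_walk b hub c hv u hu
        obtain ⟨c', hvc', hphic'⟩ := augment hr b l c hv u v hu hvneg hwalk
        exact ihN c' hvc' (by omega)

lemma card_prefix (k : ℕ) (hk : k ≤ n) :
    (Finset.univ.filter fun i : Fin n => (i : ℕ) < k).card = k := by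
  have himg : (Finset.univ.filter fun i : Fin n => (i : ℕ) < k) =
      Finset.univ.image (Fin.castLE hk) := by
    ext j
    simp only [Finset.mem_filter, Finset.mem_univ, true_and, Finset.mem_image]
    constructor
    · intro hj
      exact ⟨⟨(j : ℕ), hj⟩, by simp [Fin.castLE, Fin.ext_iff]⟩
    · rintro ⟨a, rfl⟩
      exact a.isLt
  rw [himg, Finset.card_image_of_injective _ (Fin.castLE_injective hk), Finset.card_univ,
    Fintype.card_fin]

lemma strictMono_val_le {k : ℕ} (f : Fin k → Fin n) (hf : StrictMono f) :
    ∀ i : Fin k, (i : ℕ) ≤ (f i : ℕ) := by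
  have key : ∀ m : ℕ, ∀ i : Fin k, (i : ℕ) = m → m ≤ (f i : ℕ) := by
    intro m
    induction m with
    | zero => intro i _; exact Nat.zero_le _
    | succ m ihm =>
        intro i hi
        have hjlt : m < k := by omega
        set j : Fin k := ⟨m, hjlt⟩
        have hjv : (j : ℕ) = m := rfl
        have hji : j < i := by
          rw [Fin.lt_def]; omega
        have h1 : (f j : ℕ) < (f i : ℕ) := by
          have := hf hji
          rwa [Fin.lt_def] at this
        have h2 := ihm j rfl
        omega
  intro i
  exact key (i : ℕ) i rfl

lemma psum_le_sum_subset {b : Fin n → ℤ} (hmono : Monotone b) (S : Finset (Fin n)) :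
    psum b S.card ≤ ∑ i ∈ S, b i := by
  classical
  set k := S.card with hkdef
  have hk : k ≤ n := by
    have := Finset.card_le_univ S
    rwa [Fintype.card_fin] at this
  have e := S.orderIsoOfFin hkdef.symm
  have hsumS : ∑ i ∈ S, b i = ∑ i : Fin k, b ((e i : Fin n)) := by
    rw [← Finset.sum_coe_sort S b]
    exact (Equiv.sum_comp e.toEquiv (fun x => b (x : Fin n))).symm
  have hpsum : psum b k = ∑ i : Fin k, b (Fin.castLE hk i) := by
    unfold psum
    have himg : (Finset.univ.filter fun i : Fin n => (i : ℕ) < k) =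
        Finset.univ.image (Fin.castLE hk) := by
      ext j
      simp only [Finset.mem_filter, Finset.mem_univ, true_and, Finset.mem_image]
      constructor
      · intro hj
        exact ⟨⟨(j : ℕ), hj⟩, by simp [Fin.castLE, Fin.ext_iff]⟩
      · rintro ⟨a, rfl⟩
        exact a.isLt
    rw [himg, Finset.sum_image (fun a _ a' _ h => Fin.castLE_injective hk h)]
  rw [hsumS, hpsum]
  apply Finset.sum_le_sum
  intro i _
  apply hmono
  have hmono2 : StrictMono (fun i : Fin k => (e i : Fin n)) := by
    intro a a' haa'
    have := e.strictMono haa'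
    exact this
  have := strictMono_val_le _ hmono2 i
  rw [Fin.le_def]
  simpa [Fin.castLE] using this

lemma imbalance_subset_lower {r : ℕ} {A : Fin n → Fin n → ℕ} (hA : IsRDigraph n r A)
    (S : Finset (Fin n)) :
    (r : ℤ) * S.card * ((S.card : ℤ) - n) ≤ ∑ v ∈ S, imbalance A v := by
  classical
  set f : Fin n → Fin n → ℤ := fun v j => (A v j : ℤ) - (A j v : ℤ) with hf
  have hanti : ∀ x y, f y x = - f x y := by intro x y; simp only [hf]; ring
  have h1 : ∑ v ∈ S, imbalance A v = ∑ v ∈ S, ∑ j, f v j := by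
    apply Finset.sum_congr rfl
    intro v _
    unfold imbalance
    rw [← Finset.sum_sub_distrib]
  have h2 : ∑ v ∈ S, ∑ j, f v j = ∑ v ∈ S, ∑ j ∈ Sᶜ, f v j := by
    have : ∀ v ∈ S, ∑ j, f v j = ∑ j ∈ S, f v j + ∑ j ∈ Sᶜ, f v j := by
      intro v _; rw [Finset.sum_add_sum_compl]
    rw [Finset.sum_congr rfl this, Finset.sum_add_distrib, sum_antisym_zero hanti S, zero_add]
  have h3 : ∀ v ∈ S, ∀ j ∈ Sᶜ, -(r : ℤ) ≤ f v j := by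
    intro v hv j hj
    have hne : j ≠ v := by
      intro h; rw [h] at hj; exact (Finset.mem_compl.mp hj) hv
    have := hA.2 j v hne
    have h0 : (0 : ℤ) ≤ (A v j : ℤ) := Int.ofNat_nonneg _
    simp only [hf]
    have : (A j v : ℤ) + (A v j : ℤ) ≤ (r : ℤ) := by exact_mod_cast this
    omega
  have h4 : ∑ v ∈ S, ∑ j ∈ Sᶜ, f v j ≥ ∑ v ∈ S, ∑ j ∈ Sᶜ, (-(r:ℤ)) := by
    apply Finset.sum_le_sum
    intro v hv
    exact Finset.sum_le_sum (fun j hj => h3 v hv j hj)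
  have h5 : ∑ v ∈ S, ∑ j ∈ Sᶜ, (-(r:ℤ)) = - ((r:ℤ) * S.card * Sᶜ.card) := by
    simp [Finset.sum_const, nsmul_eq_mul]
    ring
  have hcard : (Sᶜ.card : ℤ) = (n : ℤ) - S.card := by
    have := Finset.card_compl S
    have h2' : S.card ≤ Fintype.card (Fin n) := Finset.card_le_univ S
    rw [Fintype.card_fin] at this h2'
    omega
  rw [h1, h2]
  rw [h5, hcard] at h4
  nlinarith [h4]

lemma imbalance_total_zero {A : Fin n → Fin n → ℕ} :
    ∑ v, imbalance A v = 0 := by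
  set f : Fin n → Fin n → ℤ := fun v j => (A v j : ℤ) - (A j v : ℤ) with hf
  have hanti : ∀ x y, f y x = - f x y := by intro x y; simp only [hf]; ring
  have h1 : ∑ v, imbalance A v = ∑ v, ∑ j, f v j := by
    apply Finset.sum_congr rfl
    intro v _
    unfold imbalance
    rw [← Finset.sum_sub_distrib]
  rw [h1, sum_antisym_zero hanti Finset.univ]

end Stmt0Aux

/-- A non-decreasing integer sequence is the imbalance sequence of some r-digraph iff
every partial sum satisfies $\sum_{i=1}^k b_i \ge rk(k-n)$, with equality at $k=n$. -/
theorem stmt0 (n r : ℕ) (hn : 1 ≤ n) (hr : 1 ≤ r) (b : Fin n → ℤ) (hmono : Monotone b) :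
    (∃ A : Fin n → Fin n → ℕ, IsImbalanceSeq n r A b) ↔
      ((∀ k : ℕ, 1 ≤ k → k ≤ n → (r : ℤ) * k * ((k : ℤ) - n) ≤ psum b k) ∧
        psum b n = (r : ℤ) * n * ((n : ℤ) - n)) := by
  classical
  have hTn : Finset.univ.filter (fun i : Fin n => (i : ℕ) < n) = Finset.univ := by
    apply Finset.filter_true_of_mem; intro i _; exact i.isLt
  constructor
  · rintro ⟨A, hA, σ, hσ⟩
    constructor
    · intro k hk1 hkn
      set T := Finset.univ.filter (fun i : Fin n => (i : ℕ) < k) with hT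
      have hcard : T.card = k := Stmt0Aux.card_prefix k hkn
      have hpsum : psum b k = ∑ v ∈ T.image σ, imbalance A v := by
        unfold psum
        rw [Finset.sum_image (fun a _ a' _ h => σ.injective h)]
        exact Finset.sum_congr rfl (fun i _ => hσ i)
      have hcard2 : (T.image σ).card = k := by
        rw [Finset.card_image_of_injective _ σ.injective, hcard]
      have hkey := Stmt0Aux.imbalance_subset_lower hA (T.image σ)
      rw [hcard2] at hkey
      rw [hpsum]
      exact hkey
    · unfold psum
      rw [hTn]
      have h1 : ∑ i, b i = ∑ i, imbalance A (σ i) :=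
        Finset.sum_congr rfl fun i _ => hσ i
      have h2 : ∑ i, imbalance A (σ i) = ∑ v, imbalance A v :=
        Equiv.sum_comp σ (imbalance A)
      rw [h1, h2, Stmt0Aux.imbalance_total_zero]
      ring
  · rintro ⟨hlow, heq⟩
    have hsum : ∑ x, b x = 0 := by
      unfold psum at heq
      rw [hTn] at heq
      rw [heq]; ring
    have hsublow : ∀ S : Finset (Fin n),
        (r : ℤ) * S.card * ((S.card : ℤ) - n) ≤ ∑ i ∈ S, b i := by
      intro S
      rcases Nat.eq_zero_or_pos S.card with h0 | hpos
      · obtain rfl := Finset.card_eq_zero.mp h0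
        simp
      · have hk : S.card ≤ n := by
          have := Finset.card_le_univ S
          rwa [Fintype.card_fin] at this
        calc (r : ℤ) * S.card * ((S.card : ℤ) - n) ≤ psum b S.card :=
              hlow S.card hpos hk
          _ ≤ ∑ i ∈ S, b i := Stmt0Aux.psum_le_sum_subset hmono S
    have hub : ∀ S : Finset (Fin n),
        ∑ i ∈ S, b i ≤ (r : ℤ) * S.card * ((n : ℤ) - S.card) := by
      intro S
      have hc := hsublow Sᶜ
      have hcompl : ∑ i ∈ S, b i + ∑ i ∈ Sᶜ, b i = 0 := by
        rw [Finset.sum_add_sum_compl, hsum]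
      have hcard : ((Sᶜ.card : ℤ)) = (n : ℤ) - S.card := by
        have h1 := Finset.card_compl S
        have h2 : S.card ≤ Fintype.card (Fin n) := Finset.card_le_univ S
        rw [Fintype.card_fin] at h1 h2
        omega
      rw [hcard] at hc
      nlinarith [hc, hcompl]
    obtain ⟨c, hcv, hcrow⟩ := Stmt0Aux.flow_exists hr b hub hsum
    refine ⟨fun x y => (c x y).toNat, ⟨?_, ?_⟩, Equiv.refl _, ?_⟩
    · intro i
      have h1 := hcv.1 i i
      have hcii : c i i = 0 := by omega
      simp [hcii]
    · intro i j hne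
      have h1 := hcv.2 i j
      have h2 := hcv.2 j i
      have h3 := hcv.1 i j
      show (c i j).toNat + (c j i).toNat ≤ r
      omega
    · intro i
      simp only [Equiv.refl_apply]
      unfold imbalance
      rw [← Finset.sum_sub_distrib]
      have hterm : ∀ j, (((c i j).toNat : ℤ)) - (((c j i).toNat : ℤ)) = c i j := by
        intro j
        have h3 := hcv.1 i j
        omega
      rw [Finset.sum_congr rfl (fun j _ => hterm j)]
      exact (hcrow i).symm
end

section
/- A non-increasing sequence of integers B = [b_1, b_2, ..., b_n] is the imbalance sequence of some r-digraph if and only if for every k with 1 ≤ k ≤ n, the partial sum b_1 + ... + b_k ≤ r·k·(n−k), with equality when k = n. -/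
open Finset

variable {n : ℕ}

/-- cut value of a set w.r.t. capacities `c`. -/
def cutZ (c : Fin n → Fin n → ℕ) (S : Finset (Fin n)) : ℤ :=
  ∑ i ∈ S, ∑ j ∈ Sᶜ, (c i j : ℤ)

lemma sum_eq_sum_ite (S : Finset (Fin n)) (g : Fin n → ℤ) :
    ∑ i ∈ S, g i = ∑ i : Fin n, if i ∈ S then g i else 0 := by
  rw [Finset.sum_ite_mem, Finset.univ_inter]

lemma cutZ_eq (c : Fin n → Fin n → ℕ) (S : Finset (Fin n)) :
    cutZ c S = ∑ i : Fin n, ∑ j : Fin n, (if i ∈ S ∧ j ∉ S then (c i j : ℤ) else 0) := by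
  classical
  rw [cutZ, sum_eq_sum_ite]
  refine Finset.sum_congr rfl fun i _ => ?_
  by_cases hi : i ∈ S
  · simp only [hi, if_true, true_and]
    rw [sum_eq_sum_ite]
    refine Finset.sum_congr rfl fun j _ => ?_
    by_cases hj : j ∈ S <;> simp [hj]
  · simp [hi]

lemma cutZ_submod (c : Fin n → Fin n → ℕ) (S S' : Finset (Fin n)) :
    cutZ c (S ∪ S') + cutZ c (S ∩ S') ≤ cutZ c S + cutZ c S' := by
  classical
  rw [cutZ_eq, cutZ_eq, cutZ_eq, cutZ_eq, ← Finset.sum_add_distrib, ← Finset.sum_add_distrib]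
  refine Finset.sum_le_sum fun i _ => ?_
  rw [← Finset.sum_add_distrib, ← Finset.sum_add_distrib]
  refine Finset.sum_le_sum fun j _ => ?_
  by_cases h1 : i ∈ S <;> by_cases h2 : i ∈ S' <;> by_cases h3 : j ∈ S <;>
    by_cases h4 : j ∈ S' <;>
    simp [h1, h2, h3, h4, Finset.mem_union, Finset.mem_inter]


lemma realize : ∀ (N : ℕ) (c : Fin n → Fin n → ℕ) (b : Fin n → ℤ),
    (∑ i, ∑ j, c i j = N) → (∑ i, b i = 0) →
    (∀ S : Finset (Fin n), ∑ i ∈ S, b i ≤ cutZ c S) →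
    ∃ M : Fin n → Fin n → ℤ, (∀ i j, M j i = -M i j) ∧ (∀ i j, M i j ≤ (c i j : ℤ)) ∧
      (∀ i, ∑ j, M i j = b i) := by
  intro N
  induction N using Nat.strong_induction_on with
  | _ N ih =>
  intro c b hN hb hsub
  classical
  by_cases hb0 : ∀ i, b i = 0
  · exact ⟨fun _ _ => 0, fun _ _ => by simp, fun i j => by positivity,
      fun i => by simp [hb0 i]⟩
  push_neg at hb0
  obtain ⟨i₀, hi₀⟩ := hb0
  have hpex : ∃ p, 0 < b p := by
    by_contra h
    push_neg at h
    have h2 := (Finset.sum_eq_zero_iff_of_nonpos (fun i _ => h i)).mp hb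
    exact hi₀ (h2 i₀ (Finset.mem_univ _))
  obtain ⟨p, hp⟩ := hpex
  set T : Finset (Fin n) :=
    (Finset.univ.filter (fun S : Finset (Fin n) => p ∉ S ∧ ∑ i ∈ S, b i = cutZ c S)).sup id
    with hTdef
  have hT : p ∉ T ∧ ∑ i ∈ T, b i = cutZ c T := by
    rw [hTdef]
    refine Finset.sup_induction (p := fun S : Finset (Fin n) => p ∉ S ∧ ∑ i ∈ S, b i = cutZ c S)
      ⟨by simp, by simp [cutZ]⟩ ?_ ?_
    · rintro S ⟨hS1, hS2⟩ S' ⟨hS1', hS2'⟩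
      refine ⟨by simp [Finset.mem_union, hS1, hS1'], ?_⟩
      have h1 := hsub (S ∪ S')
      have h2 := hsub (S ∩ S')
      have h3 : ∑ i ∈ S ∪ S', b i + ∑ i ∈ S ∩ S', b i = ∑ i ∈ S, b i + ∑ i ∈ S', b i :=
        Finset.sum_union_inter
      have h4 := cutZ_submod c S S'
      have h5 : ∑ i ∈ S ∪ S', b i = cutZ c (S ∪ S') := by linarith
      simpa using h5
    · intro S hS
      exact (Finset.mem_filter.mp hS).2
  have hTsup : ∀ S : Finset (Fin n), p ∉ S → ∑ i ∈ S, b i = cutZ c S → S ⊆ T := by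
    intro S h1 h2
    have hmem : S ∈ Finset.univ.filter
        (fun S : Finset (Fin n) => p ∉ S ∧ ∑ i ∈ S, b i = cutZ c S) := by
      simp only [Finset.mem_filter, Finset.mem_univ, true_and]
      exact ⟨h1, h2⟩
    exact Finset.le_sup (f := id) hmem
  have hq : ∃ q, q ≠ p ∧ q ∉ T ∧ 1 ≤ c p q := by
    by_contra hcon
    push_neg at hcon
    have hzero : ∀ j : Fin n, j ≠ p → j ∉ T → c p j = 0 := by
      intro j h1 h2
      have := hcon j h1 h2
      omega
    have h1 : cutZ c (insert p T) ≤ cutZ c T := by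
      rw [cutZ_eq, cutZ_eq]
      refine Finset.sum_le_sum fun i _ => Finset.sum_le_sum fun j _ => ?_
      split_ifs with hA hB hB
      · exact le_refl _
      · -- i ∈ insert p T, j ∉ insert p T, but ¬(i ∈ T ∧ j ∉ T): show c i j ≤ 0
        obtain ⟨hA1, hA2⟩ := hA
        have hjp : j ≠ p := by
          intro hh
          exact hA2 (by simp [hh])
        have hjT : j ∉ T := by
          intro hh
          exact hA2 (Finset.mem_insert_of_mem hh)
        rcases Finset.mem_insert.mp hA1 with hip | hiT
        · subst hip
          simp [hzero j hjp hjT]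
        · exact absurd ⟨hiT, hjT⟩ hB
      · -- ¬(i ∈ insert p T ∧ j ∉ insert p T), i ∈ T, j ∉ T
        obtain ⟨hB1, hB2⟩ := hB
        positivity
      · exact le_refl _
    have h2 := hsub (insert p T)
    have h3 : ∑ i ∈ insert p T, b i = b p + ∑ i ∈ T, b i := Finset.sum_insert hT.1
    have h4 := hT.2
    linarith
  obtain ⟨q, hqp, hqT, hcq⟩ := hq
  have hpq : p ≠ q := fun hh => hqp hh.symm
  set c' : Fin n → Fin n → ℕ := fun i j => if i = p ∧ j = q then c p q - 1 else c i j with hc'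
  set b' : Fin n → ℤ :=
    fun i => b i + (if i = p then -1 else 0) + (if i = q then 1 else 0) with hb'
  have hc'le : ∀ i j, c' i j ≤ c i j := by
    intro i j
    by_cases hh : i = p ∧ j = q
    · obtain ⟨e1, e2⟩ := hh
      subst e1; subst e2
      simp only [hc', and_self, if_true]
      exact Nat.sub_le _ _
    · simp [hc', hh]
  have hc'lt : c' p q < c p q := by
    simp only [hc', and_self, if_true]
    omega
  have hc'cast : ∀ i j, (c' i j : ℤ) = (c i j : ℤ) - (if i = p ∧ j = q then 1 else 0) := by
    intro i j
    by_cases hh : i = p ∧ j = q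
    · obtain ⟨e1, e2⟩ := hh
      subst e1; subst e2
      simp only [hc', and_self, if_true]
      omega
    · simp [hc', hh]
  have hcut' : ∀ S : Finset (Fin n),
      cutZ c' S = cutZ c S - (if p ∈ S ∧ q ∉ S then 1 else 0) := by
    intro S
    rw [cutZ, cutZ]
    have hstep : ∀ i ∈ S, ∑ j ∈ Sᶜ, (c' i j : ℤ)
        = ∑ j ∈ Sᶜ, (c i j : ℤ) - (if i = p ∧ q ∈ Sᶜ then 1 else 0) := by
      intro i _
      rw [show (∑ j ∈ Sᶜ, (c' i j : ℤ))
          = ∑ j ∈ Sᶜ, ((c i j : ℤ) - (if i = p ∧ j = q then 1 else 0))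
          from Finset.sum_congr rfl fun j _ => hc'cast i j]
      rw [Finset.sum_sub_distrib]
      congr 1
      by_cases hip : i = p
      · simp [hip, Finset.sum_ite_eq']
      · simp [hip]
    rw [Finset.sum_congr rfl hstep, Finset.sum_sub_distrib]
    congr 1
    rw [show (∑ i ∈ S, (if i = p ∧ q ∈ Sᶜ then (1:ℤ) else 0))
        = ∑ i ∈ S, (if i = p then (if q ∈ Sᶜ then (1:ℤ) else 0) else 0) from
      Finset.sum_congr rfl fun i _ => by by_cases hh : i = p <;> simp [hh]]
    rw [Finset.sum_ite_eq' S p]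
    by_cases hpS : p ∈ S <;> by_cases hqS : q ∈ S <;> simp [hpS, hqS, Finset.mem_compl]
  have hBS : ∀ S : Finset (Fin n), ∑ i ∈ S, b' i
      = ∑ i ∈ S, b i + (if p ∈ S then -1 else 0) + (if q ∈ S then 1 else 0) := by
    intro S
    rw [hb']
    rw [Finset.sum_add_distrib, Finset.sum_add_distrib, Finset.sum_ite_eq' S p,
      Finset.sum_ite_eq' S q]
  have hb'sum : ∑ i, b' i = 0 := by
    have h5 := hBS Finset.univ
    simpa [hb] using h5
  have hsub' : ∀ S : Finset (Fin n), ∑ i ∈ S, b' i ≤ cutZ c' S := by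
    intro S
    rw [hBS, hcut']
    have h6 := hsub S
    have hstrict : p ∉ S → q ∈ S → ∑ i ∈ S, b i < cutZ c S := by
      intro h1 h2
      have hne : ∑ i ∈ S, b i ≠ cutZ c S := fun heq => hqT (hTsup S h1 heq h2)
      exact lt_of_le_of_ne h6 hne
    by_cases h1 : p ∈ S
    · by_cases h2 : q ∈ S <;>
        simp only [h1, h2, if_true, if_false, not_true, not_false_iff, and_self, and_false,
          false_and, true_and, and_true] <;> linarith
    · by_cases h2 : q ∈ S
      · have := hstrict h1 h2
        simp only [h1, h2, if_true, if_false, not_true, not_false_iff, and_self, and_false,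
          false_and, true_and, and_true] <;> linarith
      · simp only [h1, h2, if_true, if_false, not_true, not_false_iff, and_self, and_false,
          false_and, true_and, and_true] <;> linarith
  have hlt : ∑ i, ∑ j, c' i j < N := by
    rw [← hN]
    exact Finset.sum_lt_sum (fun i _ => Finset.sum_le_sum fun j _ => hc'le i j)
      ⟨p, Finset.mem_univ p, Finset.sum_lt_sum (fun j _ => hc'le p j)
        ⟨q, Finset.mem_univ q, hc'lt⟩⟩
  obtain ⟨M, hMa, hMle, hMrow⟩ := ih _ hlt c' b' rfl hb'sum hsub'
  refine ⟨fun i j => M i j + (if i = p ∧ j = q then 1 else 0) - (if i = q ∧ j = p then 1 else 0),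
    ?_, ?_, ?_⟩
  · intro i j
    have ha := hMa i j
    by_cases h1 : i = p ∧ j = q
    · obtain ⟨e1, e2⟩ := h1
      subst e1; subst e2
      simp only [and_self, if_true, hpq, Ne.symm hpq, false_and, and_false, if_false, ha]
      ring
    · by_cases h2 : i = q ∧ j = p
      · obtain ⟨e1, e2⟩ := h2
        subst e1; subst e2
        simp only [and_self, if_true, hpq, Ne.symm hpq, false_and, and_false, if_false, ha]
        ring
      · have h1' : ¬ (j = q ∧ i = p) := fun hh => h1 ⟨hh.2, hh.1⟩
        have h2' : ¬ (j = p ∧ i = q) := fun hh => h2 ⟨hh.2, hh.1⟩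
        simp only [h1, h2, h1', h2', if_false, ha]
        ring
  · intro i j
    have hle := hMle i j
    rw [hc'cast] at hle
    by_cases h1 : i = p ∧ j = q
    · have h2 : ¬ (i = q ∧ j = p) := by
        rintro ⟨e1, e2⟩
        exact hpq (h1.1.symm.trans e1)
      simp only [h1, h2, if_true, if_false] at hle ⊢
      omega
    · by_cases h2 : i = q ∧ j = p
      · simp only [h1, h2, if_true, if_false] at hle ⊢
        omega
      · simp only [h1, h2, if_false] at hle ⊢
        omega
  · intro i
    have hrow := hMrow i
    rw [show (∑ j, ((M i j + (if i = p ∧ j = q then (1:ℤ) else 0))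
        - (if i = q ∧ j = p then 1 else 0)))
      = (∑ j, (M i j + (if i = p ∧ j = q then (1:ℤ) else 0)))
        - (∑ j, (if i = q ∧ j = p then (1:ℤ) else 0)) from Finset.sum_sub_distrib _ _]
    rw [Finset.sum_add_distrib, hrow]
    have e1 : (∑ j, (if i = p ∧ j = q then (1:ℤ) else 0)) = if i = p then 1 else 0 := by
      by_cases hh : i = p <;> simp [hh, Finset.sum_ite_eq']
    have e2 : (∑ j, (if i = q ∧ j = p then (1:ℤ) else 0)) = if i = q then 1 else 0 := by
      by_cases hh : i = q <;> simp [hh, Finset.sum_ite_eq']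
    rw [e1, e2, hb']
    by_cases h1 : i = p
    · subst h1
      simp [hpq]
    · by_cases h2 : i = q
      · subst h2
        simp [hqp, h1]
      · simp [h1, h2]

lemma card_filter_lt {n : ℕ} (k : ℕ) (hk : k ≤ n) :
    (Finset.univ.filter (fun i : Fin n => (i : ℕ) < k)).card = k := by
  have h : Finset.univ.filter (fun i : Fin n => (i : ℕ) < k)
      = Finset.map (Fin.castLEEmb hk) Finset.univ := by
    ext i
    simp only [Finset.mem_filter, Finset.mem_univ, true_and, Finset.mem_map]
    constructor
    · intro hi
      exact ⟨⟨(i : ℕ), hi⟩, rfl⟩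
    · rintro ⟨j, -, rfl⟩
      simpa [Fin.castLEEmb] using j.isLt
  rw [h, Finset.card_map, Finset.card_univ, Fintype.card_fin]

lemma sum_le_psum {n : ℕ} (b : Fin n → ℤ) (hanti : Antitone b) (S : Finset (Fin n))
    (h1 : 1 ≤ S.card) : ∑ i ∈ S, b i ≤ psum b S.card := by
  classical
  set k := S.card with hk
  have hkn : k ≤ n := by
    have := Finset.card_le_univ S
    simpa using this
  set F := Finset.univ.filter (fun i : Fin n => (i : ℕ) < k) with hF
  have hFcard : F.card = k := card_filter_lt k hkn
  have hmlt : k - 1 < n := by omega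
  set m : Fin n := ⟨k - 1, hmlt⟩ with hm
  have hcard : (S \ F).card = (F \ S).card := by
    have e1 := Finset.card_sdiff_add_card_inter S F
    have e2 := Finset.card_sdiff_add_card_inter F S
    rw [Finset.inter_comm] at e2
    omega
  have hub : ∑ i ∈ S \ F, b i ≤ (S \ F).card • b m := by
    refine Finset.sum_le_card_nsmul _ _ _ fun i hi => ?_
    refine hanti ?_
    have hi2 : i ∉ F := (Finset.mem_sdiff.mp hi).2
    have : ¬ ((i : ℕ) < k) := by simpa [hF] using hi2
    rw [Fin.le_def]
    simp only [hm]
    omega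
  have hlb : (F \ S).card • b m ≤ ∑ i ∈ F \ S, b i := by
    refine Finset.card_nsmul_le_sum _ _ _ fun i hi => ?_
    refine hanti ?_
    have hi2 : i ∈ F := (Finset.mem_sdiff.mp hi).1
    have : (i : ℕ) < k := by simpa [hF] using hi2
    rw [Fin.le_def]
    simp only [hm]
    omega
  have hsplit1 : ∑ i ∈ S, b i = ∑ i ∈ S ∩ F, b i + ∑ i ∈ S \ F, b i :=
    (Finset.sum_inter_add_sum_sdiff S F b).symm
  have hsplit2 : psum b k = ∑ i ∈ F ∩ S, b i + ∑ i ∈ F \ S, b i :=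
    (Finset.sum_inter_add_sum_sdiff F S b).symm
  rw [hsplit1, hsplit2, Finset.inter_comm F S]
  have : ∑ i ∈ S \ F, b i ≤ ∑ i ∈ F \ S, b i := by
    calc ∑ i ∈ S \ F, b i ≤ (S \ F).card • b m := hub
    _ = (F \ S).card • b m := by rw [hcard]
    _ ≤ ∑ i ∈ F \ S, b i := hlb
  linarith

lemma sum_imbalance_le {n r : ℕ} (A : Fin n → Fin n → ℕ) (hA : IsRDigraph n r A)
    (S : Finset (Fin n)) :
    ∑ v ∈ S, imbalance A v ≤ (r : ℤ) * S.card * ((n : ℤ) - S.card) := by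
  classical
  have himb : ∀ v, imbalance A v = ∑ j, ((A v j : ℤ) - (A j v : ℤ)) := by
    intro v
    rw [imbalance, Finset.sum_sub_distrib]
  have hsplit : ∀ v, (∑ j, ((A v j : ℤ) - (A j v : ℤ)))
      = ∑ j ∈ S, ((A v j : ℤ) - (A j v : ℤ)) + ∑ j ∈ Sᶜ, ((A v j : ℤ) - (A j v : ℤ)) := by
    intro v
    rw [Finset.sum_add_sum_compl]
  have hzero : ∑ v ∈ S, ∑ j ∈ S, ((A v j : ℤ) - (A j v : ℤ)) = 0 := by
    have e1 : ∑ v ∈ S, ∑ j ∈ S, ((A v j : ℤ) - (A j v : ℤ))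
        = (∑ v ∈ S, ∑ j ∈ S, (A v j : ℤ)) - ∑ v ∈ S, ∑ j ∈ S, (A j v : ℤ) := by
      rw [← Finset.sum_sub_distrib]
      exact Finset.sum_congr rfl fun v _ => Finset.sum_sub_distrib _ _
    rw [e1, Finset.sum_comm]
    ring
  have hcross : ∑ v ∈ S, ∑ j ∈ Sᶜ, ((A v j : ℤ) - (A j v : ℤ))
      ≤ ∑ v ∈ S, ∑ j ∈ Sᶜ, (r : ℤ) := by
    refine Finset.sum_le_sum fun v hv => Finset.sum_le_sum fun j hj => ?_
    have hne : v ≠ j := by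
      intro hh
      rw [hh] at hv
      exact (Finset.mem_compl.mp hj) hv
    have := hA.2 v j hne
    have h1 : (A v j : ℤ) + (A j v : ℤ) ≤ (r : ℤ) := by exact_mod_cast this
    have h2 : (0 : ℤ) ≤ (A j v : ℤ) := by positivity
    linarith
  have hconst : ∑ v ∈ S, ∑ j ∈ Sᶜ, (r : ℤ) = (S.card : ℤ) * (Sᶜ.card : ℤ) * r := by
    simp [Finset.sum_const, mul_comm]
    ring
  have hcompl : (Sᶜ.card : ℤ) = (n : ℤ) - S.card := by
    have := Finset.card_compl S
    have h2 : S.card ≤ n := by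
      have := Finset.card_le_univ S
      simpa using this
    simp only [this]
    push_cast [Fintype.card_fin] at *
    omega
  calc ∑ v ∈ S, imbalance A v
      = ∑ v ∈ S, ∑ j ∈ S, ((A v j : ℤ) - (A j v : ℤ))
        + ∑ v ∈ S, ∑ j ∈ Sᶜ, ((A v j : ℤ) - (A j v : ℤ)) := by
        rw [← Finset.sum_add_distrib]
        exact Finset.sum_congr rfl fun v _ => by rw [himb, hsplit]
    _ = ∑ v ∈ S, ∑ j ∈ Sᶜ, ((A v j : ℤ) - (A j v : ℤ)) := by rw [hzero, zero_add]
    _ ≤ (S.card : ℤ) * (Sᶜ.card : ℤ) * r := by rw [← hconst]; exact hcross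
    _ = (r : ℤ) * S.card * ((n : ℤ) - S.card) := by rw [hcompl]; ring

lemma sum_imbalance_zero {n : ℕ} (A : Fin n → Fin n → ℕ) :
    ∑ v, imbalance A v = 0 := by
  have : ∑ v, imbalance A v = (∑ v, ∑ j, (A v j : ℤ)) - ∑ v, ∑ j, (A j v : ℤ) := by
    rw [← Finset.sum_sub_distrib]
    rfl
  rw [this, Finset.sum_comm]
  ring

lemma card_le_n {n : ℕ} (S : Finset (Fin n)) : S.card ≤ n := by
  simpa using Finset.card_le_univ S

lemma card_compl_int {n : ℕ} (S : Finset (Fin n)) : ((Sᶜ).card : ℤ) = (n : ℤ) - S.card := by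
  have h1 := Finset.card_compl S
  have h2 := card_le_n S
  simp only [h1]
  push_cast [Fintype.card_fin]
  omega

lemma filter_lt_self_eq_univ {n : ℕ} :
    Finset.univ.filter (fun i : Fin n => (i : ℕ) < n) = Finset.univ := by
  ext i
  simp [i.isLt]

/-- A non-increasing integer sequence is the imbalance sequence of some r-digraph iff
every partial sum satisfies $\sum_{i=1}^k b_i \le rk(n-k)$, with equality at $k=n$. -/
theorem stmt1 (n r : ℕ) (hn : 1 ≤ n) (hr : 1 ≤ r) (b : Fin n → ℤ) (hanti : Antitone b) :
    (∃ A : Fin n → Fin n → ℕ, IsImbalanceSeq n r A b) ↔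
      ((∀ k : ℕ, 1 ≤ k → k ≤ n → psum b k ≤ (r : ℤ) * k * ((n : ℤ) - k)) ∧
        psum b n = (r : ℤ) * n * ((n : ℤ) - n)) := by
  classical
  constructor
  · rintro ⟨A, hA, σ, hσ⟩
    have key : ∀ k : ℕ, k ≤ n → psum b k = ∑ v ∈ (Finset.univ.filter
        (fun i : Fin n => (i : ℕ) < k)).image σ, imbalance A v := by
      intro k hk
      rw [psum]
      rw [Finset.sum_image (fun x _ y _ h => σ.injective h)]
      exact Finset.sum_congr rfl fun i _ => hσ i
    constructor
    · intro k hk1 hkn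
      rw [key k hkn]
      have hcard : ((Finset.univ.filter (fun i : Fin n => (i : ℕ) < k)).image σ).card = k := by
        rw [Finset.card_image_of_injective _ σ.injective, card_filter_lt k hkn]
      have := sum_imbalance_le A hA ((Finset.univ.filter
        (fun i : Fin n => (i : ℕ) < k)).image σ)
      rw [hcard] at this
      exact this
    · rw [psum, filter_lt_self_eq_univ]
      have e1 : ∑ i, b i = ∑ i, imbalance A (σ i) := Finset.sum_congr rfl fun i _ => hσ i
      rw [e1, Equiv.sum_comp σ (imbalance A), sum_imbalance_zero A]
      ring
  · rintro ⟨h1, h2⟩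
    have hz : ∑ i, b i = 0 := by
      rw [psum, filter_lt_self_eq_univ] at h2
      have : (r : ℤ) * n * ((n : ℤ) - n) = 0 := by ring
      rw [this] at h2
      exact h2
    set c : Fin n → Fin n → ℕ := fun i j => if i = j then 0 else r with hc
    have hcut : ∀ S : Finset (Fin n), cutZ c S = (r : ℤ) * S.card * ((n : ℤ) - S.card) := by
      intro S
      rw [cutZ]
      have hstep : ∀ i ∈ S, ∑ j ∈ Sᶜ, (c i j : ℤ) = ∑ j ∈ Sᶜ, (r : ℤ) := by
        intro i hi
        refine Finset.sum_congr rfl fun j hj => ?_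
        have hne : i ≠ j := fun hh => (Finset.mem_compl.mp hj) (hh ▸ hi)
        simp [hc, hne]
      rw [Finset.sum_congr rfl hstep]
      simp only [Finset.sum_const, smul_eq_mul, nsmul_eq_mul]
      rw [card_compl_int S]
      push_cast
      ring
    have hsubS : ∀ S : Finset (Fin n), ∑ i ∈ S, b i ≤ cutZ c S := by
      intro S
      rcases Nat.eq_zero_or_pos S.card with h0 | hpos
      · have hS : S = ∅ := Finset.card_eq_zero.mp h0
        subst hS
        simp [hcut]
      · have e1 := sum_le_psum b hanti S hpos
        have e2 := h1 S.card hpos (card_le_n S)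
        rw [hcut]
        linarith
    obtain ⟨M, hMa, hMle, hMrow⟩ := realize (∑ i, ∑ j, c i j) c b rfl hz hsubS
    refine ⟨fun i j => (M i j).toNat, ⟨⟨?_, ?_⟩, Equiv.refl _, ?_⟩⟩
    · intro i
      show (M i i).toNat = 0
      have := hMa i i
      omega
    · intro i j hij
      show (M i j).toNat + (M j i).toNat ≤ r
      have e1 : M i j ≤ (r : ℤ) := by
        have := hMle i j
        simpa [hc, hij] using this
      have e2 : M j i ≤ (r : ℤ) := by
        have := hMle j i
        simpa [hc, hij.symm] using this
      have e3 := hMa i j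
      omega
    · intro i
      show b i = imbalance ((fun i j => (M i j).toNat)) ((Equiv.refl _) i)
      simp only [Equiv.refl_apply]
      rw [imbalance, ← Finset.sum_sub_distrib]
      rw [show (∑ j, (((M i j).toNat : ℤ) - ((M j i).toNat : ℤ))) = ∑ j, M i j from
        Finset.sum_congr rfl fun j _ => by rw [hMa i j]; exact Int.toNat_sub_toNat_neg _]
      exact (hMrow i).symm
end

section
/- Let b_1 ≥ b_2 ≥ ... ≥ b_n be integers satisfying b_1 + ... + b_k ≤ r·k·(n−k) for all 1 ≤ k ≤ n with equality at k = n. Then for every 1 ≤ k ≤ n, ∑_{i=1}^k b_i² ≤ ∑_{i=1}^k (2rn − 2rk − b_i)². -/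
open Finset

/-- Arithmetic version: from the partial-sum upper bounds $\sum_{i=1}^k b_i \le rk(n-k)$
(with equality at k = n) follows the sum-of-squares inequality. -/
theorem stmt5 (n r : ℕ) (hn : 1 ≤ n) (hr : 1 ≤ r) (b : Fin n → ℤ) (hanti : Antitone b)
    (hineq : ∀ k : ℕ, 1 ≤ k → k ≤ n → psum b k ≤ (r : ℤ) * k * ((n : ℤ) - k))
    (heqn : psum b n = (r : ℤ) * n * ((n : ℤ) - n)) :
    ∀ k : ℕ, 1 ≤ k → k ≤ n →
      (∑ i ∈ Finset.univ.filter (fun i : Fin n => (i : ℕ) < k), (b i) ^ 2) ≤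
        ∑ i ∈ Finset.univ.filter (fun i : Fin n => (i : ℕ) < k),
          (2 * (r : ℤ) * n - 2 * (r : ℤ) * k - b i) ^ 2 := by
  intro k hk1 hkn
  set s := Finset.univ.filter (fun i : Fin n => (i : ℕ) < k) with hs
  have hcard : s.card = k := by
    have h2 : ((Finset.range n).filter (fun i => i < k)) = Finset.range k := by
      ext a; simp; omega
    have h1 : s = ((Finset.range n).filter (fun i => i < k)).attachFin
        (by intro m hm; simp at hm; omega) := by
      ext a; simp [hs]
    rw [h1, Finset.card_attachFin, h2, Finset.card_range]
  set c : ℤ := 2 * (r : ℤ) * n - 2 * (r : ℤ) * k with hc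
  have hkn' : (k : ℤ) ≤ n := by exact_mod_cast hkn
  have hc0 : 0 ≤ c := by
    have hr' : (1 : ℤ) ≤ r := by exact_mod_cast hr
    nlinarith
  have hkey : psum b k ≤ (r : ℤ) * k * ((n : ℤ) - k) := hineq k hk1 hkn
  have hexpand : ∑ i ∈ s, (c - b i) ^ 2
      = (k : ℤ) * c ^ 2 - 2 * c * psum b k + ∑ i ∈ s, (b i) ^ 2 := by
    have : ∀ i ∈ s, (c - b i) ^ 2 = c ^ 2 - 2 * c * b i + (b i) ^ 2 := by
      intro i _; ring
    rw [Finset.sum_congr rfl this, Finset.sum_add_distrib, Finset.sum_sub_distrib,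
      Finset.sum_const, hcard, ← Finset.mul_sum]
    simp [psum, hs, nsmul_eq_mul]
  rw [hexpand]
  have h4 : c * psum b k ≤ c * ((r : ℤ) * k * ((n : ℤ) - k)) :=
    mul_le_mul_of_nonneg_left hkey hc0
  have hkc2 : (k : ℤ) * c ^ 2 = 2 * ((r : ℤ) * k * ((n : ℤ) - k)) * c := by rw [hc]; ring
  linarith
end

section
/- Let p_1 < p_2 < ... < p_m and q_1 < q_2 < ... < q_n be positive integers whose greatest common divisor t satisfies 1 ≤ t ≤ r. Then there exists an r-digraph whose imbalance set (the set of distinct vertex imbalances) is exactly {p_1, ..., p_m} ∪ {−q_1, ..., −q_n}. -/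
open Finset

/-- Vertex type: for each pair `(i,j)`, a component with `q j / t` sources and
`p i / t` sinks. -/
abbrev Vx (m n t : ℕ) (p : Fin m → ℕ) (q : Fin n → ℕ) : Type :=
  Σ _k : Fin m × Fin n, (Fin (q _k.2 / t) ⊕ Fin (p _k.1 / t))

/-- Arc multiplicities: `t` arcs from each source to each sink of the same component. -/
def Bmat (m n t : ℕ) (p : Fin m → ℕ) (q : Fin n → ℕ) :
    Vx m n t p q → Vx m n t p q → ℕ
  | ⟨k, Sum.inl _⟩, ⟨k', Sum.inr _⟩ => if k = k' then t else 0
  | _, _ => 0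

lemma Bmat_out_src (m n t : ℕ) (p : Fin m → ℕ) (q : Fin n → ℕ)
    (k : Fin m × Fin n) (a : Fin (q k.2 / t)) :
    ∑ w : Vx m n t p q, Bmat m n t p q ⟨k, Sum.inl a⟩ w = t * (p k.1 / t) := by
  rw [← Finset.univ_sigma_univ, Finset.sum_sigma]
  have : ∀ k' : Fin m × Fin n,
      ∑ x : Fin (q k'.2 / t) ⊕ Fin (p k'.1 / t),
        Bmat m n t p q ⟨k, Sum.inl a⟩ ⟨k', x⟩ =
      if k = k' then t * (p k'.1 / t) else 0 := by
    intro k'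
    rw [Fintype.sum_sum_type]
    simp [Bmat, Finset.sum_ite_eq, mul_comm]
  simp only [this, Finset.sum_ite_eq, Finset.mem_univ, if_true]

lemma Bmat_in_src (m n t : ℕ) (p : Fin m → ℕ) (q : Fin n → ℕ)
    (k : Fin m × Fin n) (a : Fin (q k.2 / t)) :
    ∑ w : Vx m n t p q, Bmat m n t p q w ⟨k, Sum.inl a⟩ = 0 := by
  apply Finset.sum_eq_zero
  rintro ⟨k', (x | x)⟩ _ <;> rfl

lemma Bmat_out_snk (m n t : ℕ) (p : Fin m → ℕ) (q : Fin n → ℕ)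
    (k : Fin m × Fin n) (a : Fin (p k.1 / t)) :
    ∑ w : Vx m n t p q, Bmat m n t p q ⟨k, Sum.inr a⟩ w = 0 := by
  apply Finset.sum_eq_zero
  rintro ⟨k', (x | x)⟩ _ <;> rfl

lemma Bmat_in_snk (m n t : ℕ) (p : Fin m → ℕ) (q : Fin n → ℕ)
    (k : Fin m × Fin n) (a : Fin (p k.1 / t)) :
    ∑ w : Vx m n t p q, Bmat m n t p q w ⟨k, Sum.inr a⟩ = t * (q k.2 / t) := by
  rw [← Finset.univ_sigma_univ, Finset.sum_sigma]
  have : ∀ k' : Fin m × Fin n,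
      ∑ x : Fin (q k'.2 / t) ⊕ Fin (p k'.1 / t),
        Bmat m n t p q ⟨k', x⟩ ⟨k, Sum.inr a⟩ =
      if k' = k then t * (q k'.2 / t) else 0 := by
    intro k'
    rw [Fintype.sum_sum_type]
    simp [Bmat, mul_comm]
  simp only [this, Finset.sum_ite_eq', Finset.mem_univ, if_true]

/-- Existence of an r-digraph with a prescribed imbalance set
$\{p_1,\dots,p_m\} \cup \{-q_1,\dots,-q_n\}$, provided the gcd t of all the
$p_i, q_j$ satisfies $1 \le t \le r$. -/
theorem stmt10 (m n r t : ℕ) (hm : 1 ≤ m) (hn : 1 ≤ n)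
    (p : Fin m → ℕ) (q : Fin n → ℕ)
    (hp : StrictMono p) (hq : StrictMono q)
    (hppos : ∀ i, 0 < p i) (hqpos : ∀ j, 0 < q j)
    (ht : t = Nat.gcd (Finset.univ.gcd p) (Finset.univ.gcd q))
    (ht1 : 1 ≤ t) (htr : t ≤ r) :
    ∃ (N : ℕ) (A : Fin N → Fin N → ℕ), IsRDigraph N r A ∧
      Set.range (imbalance A) =
        Set.range (fun i : Fin m => (p i : ℤ)) ∪
          Set.range (fun j : Fin n => -(q j : ℤ)) := by
  classical
  have hdp : ∀ i, t ∣ p i := by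
    intro i; rw [ht]
    exact (Nat.gcd_dvd_left _ _).trans (Finset.gcd_dvd (Finset.mem_univ i))
  have hdq : ∀ j, t ∣ q j := by
    intro j; rw [ht]
    exact (Nat.gcd_dvd_right _ _).trans (Finset.gcd_dvd (Finset.mem_univ j))
  have hpdiv : ∀ i, t * (p i / t) = p i := fun i => Nat.mul_div_cancel' (hdp i)
  have hqdiv : ∀ j, t * (q j / t) = q j := fun j => Nat.mul_div_cancel' (hdq j)
  have hppos' : ∀ i, 0 < p i / t := fun i =>
    Nat.div_pos (Nat.le_of_dvd (hppos i) (hdp i)) ht1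
  have hqpos' : ∀ j, 0 < q j / t := fun j =>
    Nat.div_pos (Nat.le_of_dvd (hqpos j) (hdq j)) ht1
  set V := Vx m n t p q with hV
  set N := Fintype.card V with hN
  set e : Fin N ≃ V := (Fintype.equivFin V).symm with he
  refine ⟨N, fun i j => Bmat m n t p q (e i) (e j), ?_, ?_⟩
  · constructor
    · intro i
      have : ∀ v : V, Bmat m n t p q v v = 0 := by rintro ⟨k, (x | x)⟩ <;> rfl
      exact this (e i)
    · intro i j _
      have : ∀ u v : V, Bmat m n t p q u v + Bmat m n t p q v u ≤ r := by
        rintro ⟨k, (x | x)⟩ ⟨k', (y | y)⟩ <;>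
          simp only [Bmat, Nat.add_zero, Nat.zero_add] <;>
          [exact Nat.zero_le r; (split <;> omega); (split <;> omega); exact Nat.zero_le r]
      exact this _ _
  · have himb : ∀ i : Fin N, imbalance (fun i j => Bmat m n t p q (e i) (e j)) i =
        (match e i with
          | ⟨k, Sum.inl _⟩ => (p k.1 : ℤ)
          | ⟨k, Sum.inr _⟩ => -(q k.2 : ℤ)) := by
      intro i
      unfold imbalance
      rw [show (∑ j : Fin N, (Bmat m n t p q (e i) (e j) : ℤ))
            = ∑ w : V, (Bmat m n t p q (e i) w : ℤ) from
          Equiv.sum_comp e (fun w => (Bmat m n t p q (e i) w : ℤ)),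
        show (∑ j : Fin N, (Bmat m n t p q (e j) (e i) : ℤ))
            = ∑ w : V, (Bmat m n t p q w (e i) : ℤ) from
          Equiv.sum_comp e (fun w => (Bmat m n t p q w (e i) : ℤ))]
      rcases hv : e i with ⟨k, (x | x)⟩
      · simp only [← Nat.cast_sum]; erw [Bmat_out_src m n t p q k x, Bmat_in_src m n t p q k x]; simp [hpdiv]
      · simp only [← Nat.cast_sum]; erw [Bmat_out_snk m n t p q k x, Bmat_in_snk m n t p q k x]; simp [hqdiv]
    ext z
    simp only [Set.mem_range, Set.mem_union]
    constructor
    · rintro ⟨i, rfl⟩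
      rw [himb i]
      rcases e i with ⟨k, (x | x)⟩
      · exact Or.inl ⟨k.1, rfl⟩
      · exact Or.inr ⟨k.2, rfl⟩
    · rintro (⟨i, rfl⟩ | ⟨j, rfl⟩)
      · refine ⟨e.symm ⟨(i, ⟨0, hn⟩), Sum.inl ⟨0, hqpos' _⟩⟩, ?_⟩
        rw [himb, Equiv.apply_symm_apply]
      · refine ⟨e.symm ⟨(⟨0, hm⟩, j), Sum.inr ⟨0, hppos' _⟩⟩, ?_⟩
        rw [himb, Equiv.apply_symm_apply]
end

section
/- Among all r-digraphs realizing a fixed imbalance sequence B, any realization with the minimum number of arcs is transitive, i.e., contains no intransitive oriented triple and no pair of oppositely directed arcs between two vertices. -/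
open Finset

/-- Total number of arcs. -/
def arcCount {n : ℕ} (A : Fin n → Fin n → ℕ) : ℕ := ∑ i, ∑ j, A i j

/-- indicator -/
def eInd {n : ℕ} (a b i j : Fin n) : ℤ := if i = a ∧ j = b then 1 else 0

lemma sum_e_left {n : ℕ} (a b i : Fin n) :
    ∑ j, eInd a b i j = if i = a then 1 else 0 := by
  simp [eInd, ite_and]

lemma sum_e_right {n : ℕ} (a b j : Fin n) :
    ∑ i, eInd a b i j = if j = b then 1 else 0 := by
  unfold eInd
  by_cases h : j = b <;> simp [h]

lemma key {n r : ℕ} {b : Fin n → ℤ} {A : Fin n → Fin n → ℕ}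
    (hA : IsImbalanceSeq n r A b)
    (hmin : ∀ A' : Fin n → Fin n → ℕ, IsImbalanceSeq n r A' b → arcCount A ≤ arcCount A')
    (A' : Fin n → Fin n → ℕ) (h1 : IsRDigraph n r A')
    (h2 : ∀ v, imbalance A' v = imbalance A v)
    (h3 : arcCount A' < arcCount A) : False := by
  obtain ⟨σ, hσ⟩ := hA.2
  have : IsImbalanceSeq n r A' b := ⟨h1, σ, fun i => by rw [hσ i, h2]⟩
  exact absurd (hmin A' this) (by omega)

lemma arcCount_int {n : ℕ} (A : Fin n → Fin n → ℕ) :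
    (arcCount A : ℤ) = ∑ i, ∑ j, (A i j : ℤ) := by
  unfold arcCount; push_cast; rfl

/-- Any realization of an imbalance sequence with the minimum number of arcs is transitive:
it has no pair of oppositely directed arcs, no directed 3-cycle, and no directed path
u→v→w with no arcs between u and w. -/
theorem stmt13 (n r : ℕ) (b : Fin n → ℤ) (A : Fin n → Fin n → ℕ)
    (hA : IsImbalanceSeq n r A b)
    (hmin : ∀ A' : Fin n → Fin n → ℕ, IsImbalanceSeq n r A' b → arcCount A ≤ arcCount A') :
    (∀ u v : Fin n, u ≠ v → ¬(1 ≤ A u v ∧ 1 ≤ A v u)) ∧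
    (∀ u v w : Fin n, u ≠ v → v ≠ w → u ≠ w →
      ¬(1 ≤ A u v ∧ 1 ≤ A v w ∧ 1 ≤ A w u) ∧
      ¬(1 ≤ A u v ∧ 1 ≤ A v w ∧ A u w = 0 ∧ A w u = 0)) := by
  obtain ⟨⟨hloop, hbd⟩, hperm⟩ := hA
  constructor
  · -- no opposite arcs
    rintro u v huv ⟨h1, h2⟩
    set A' : Fin n → Fin n → ℕ := fun i j =>
      A i j - (if i = u ∧ j = v then 1 else 0) - (if i = v ∧ j = u then 1 else 0) with hA'
    have hcast : ∀ i j, (A' i j : ℤ) = A i j - eInd u v i j - eInd v u i j := by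
      intro i j
      simp only [hA', eInd]
      split_ifs <;> (try casesm* _ ∧ _) <;> subst_vars <;> first | omega | simp_all
    refine key ⟨⟨hloop, hbd⟩, hperm⟩ hmin A' ⟨?_, ?_⟩ ?_ ?_
    · intro i; simp only [hA']; rw [hloop]; omega
    · intro i j hij
      have := hbd i j hij
      simp only [hA']; omega
    · intro x
      unfold imbalance
      simp only [hcast, Finset.sum_sub_distrib, sum_e_left, sum_e_right]
      split_ifs <;> ring
    · have h5 : (arcCount A' : ℤ) < arcCount A := by
        rw [arcCount_int, arcCount_int]
        simp only [hcast, Finset.sum_sub_distrib, sum_e_left, sum_e_right]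
        simp [Finset.sum_ite_eq']
        all_goals omega
      exact_mod_cast h5
  · rintro u v w huv hvw huw
    constructor
    · -- no 3-cycle
      rintro ⟨h1, h2, h3⟩
      set A' : Fin n → Fin n → ℕ := fun i j =>
        A i j - (if i = u ∧ j = v then 1 else 0) - (if i = v ∧ j = w then 1 else 0)
          - (if i = w ∧ j = u then 1 else 0) with hA'
      have hcast : ∀ i j, (A' i j : ℤ) =
          A i j - eInd u v i j - eInd v w i j - eInd w u i j := by
        intro i j
        simp only [hA', eInd]
        split_ifs <;> (try casesm* _ ∧ _) <;> subst_vars <;> first | omega | simp_all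
      refine key ⟨⟨hloop, hbd⟩, hperm⟩ hmin A' ⟨?_, ?_⟩ ?_ ?_
      · intro i; simp only [hA']; rw [hloop]; omega
      · intro i j hij
        have := hbd i j hij
        simp only [hA']; omega
      · intro x
        unfold imbalance
        simp only [hcast, Finset.sum_sub_distrib, sum_e_left, sum_e_right]
        split_ifs <;> simp_all <;> ring
      · have h5 : (arcCount A' : ℤ) < arcCount A := by
          rw [arcCount_int, arcCount_int]
          simp only [hcast, Finset.sum_sub_distrib, sum_e_left, sum_e_right]
          simp [Finset.sum_ite_eq']
          all_goals omega
        exact_mod_cast h5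
    · -- no induced path u→v→w
      rintro ⟨h1, h2, h3, h4⟩
      have hr : 1 ≤ r := le_trans (by omega) (hbd u v huv)
      set A' : Fin n → Fin n → ℕ := fun i j =>
        (A i j + (if i = u ∧ j = w then 1 else 0))
          - (if i = u ∧ j = v then 1 else 0) - (if i = v ∧ j = w then 1 else 0) with hA'
      have hcast : ∀ i j, (A' i j : ℤ) =
          A i j + eInd u w i j - eInd u v i j - eInd v w i j := by
        intro i j
        simp only [hA', eInd]
        split_ifs <;> (try casesm* _ ∧ _) <;> subst_vars <;> first | omega | simp_all
      refine key ⟨⟨hloop, hbd⟩, hperm⟩ hmin A' ⟨?_, ?_⟩ ?_ ?_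
      · intro i; simp only [hA']
        rw [hloop]
        have hne : ¬(i = u ∧ i = w) := fun ⟨a, c⟩ => huw (a ▸ c ▸ rfl)
        rw [if_neg hne]
        all_goals omega
      · intro i j hij
        have hb := hbd i j hij
        have hz : (A' i j : ℤ) + A' j i ≤ r := by
          rw [hcast, hcast]
          unfold eInd
          split_ifs <;> (try casesm* _ ∧ _) <;> subst_vars <;> first | omega | simp_all
        exact_mod_cast hz
      · intro x
        unfold imbalance
        simp only [hcast, Finset.sum_sub_distrib, Finset.sum_add_distrib,
          sum_e_left, sum_e_right]
        split_ifs <;> simp_all <;> ring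
      · have h5 : (arcCount A' : ℤ) < arcCount A := by
          rw [arcCount_int, arcCount_int]
          simp only [hcast, Finset.sum_sub_distrib, Finset.sum_add_distrib,
            sum_e_left, sum_e_right]
          simp [Finset.sum_ite_eq']
          all_goals omega
        exact_mod_cast h5
end

section
/- Let n ≥ 2, r ≥ 1 and let b_1 ≤ ... ≤ b_n be the imbalance sequence of an r-digraph D with b_n > b_1 + 1, where vertex v_1 has imbalance b_1 and vertex v_n has imbalance b_n. Then there exists an r-digraph D' on the same vertex set whose imbalance sequence is b_1+1, b_2, ..., b_{n−1}, b_n−1 (re-sorted if necessary). -/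
open Finset

def arcInc {n : ℕ} (A : Fin n → Fin n → ℕ) (a b : Fin n) : Fin n → Fin n → ℕ :=
  fun i j => if i = a ∧ j = b then A i j + 1 else A i j

def arcDec {n : ℕ} (A : Fin n → Fin n → ℕ) (a b : Fin n) : Fin n → Fin n → ℕ :=
  fun i j => if i = a ∧ j = b then A i j - 1 else A i j

lemma arcInc_apply {n : ℕ} (A : Fin n → Fin n → ℕ) (a b i j : Fin n) :
    ((arcInc A a b i j : ℤ)) = A i j + (if i = a ∧ j = b then 1 else 0) := by
  unfold arcInc; split_ifs <;> push_cast <;> ring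

lemma arcDec_apply {n : ℕ} (A : Fin n → Fin n → ℕ) (a b i j : Fin n)
    (h : 1 ≤ A a b) :
    ((arcDec A a b i j : ℤ)) = A i j - (if i = a ∧ j = b then 1 else 0) := by
  unfold arcDec; split_ifs with hh
  · obtain ⟨h1, h2⟩ := hh; subst h1; subst h2
    have : (1:ℤ) ≤ A i j := by exact_mod_cast h
    push_cast [Nat.cast_sub h]; ring
  · push_cast; ring

lemma imbalance_arcInc {n : ℕ} (A : Fin n → Fin n → ℕ) (a b : Fin n) (v : Fin n) :
    imbalance (arcInc A a b) v =
      imbalance A v + (if v = a then 1 else 0) - (if v = b then 1 else 0) := by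
  unfold imbalance
  simp only [arcInc_apply, Finset.sum_add_distrib, Finset.sum_sub_distrib]
  have h1 : ∑ j, (if v = a ∧ j = b then (1:ℤ) else 0) = if v = a then 1 else 0 := by
    by_cases h : v = a <;> simp [h]
  have h2 : ∑ j, (if j = a ∧ v = b then (1:ℤ) else 0) = if v = b then 1 else 0 := by
    by_cases h : v = b <;> simp [h]
  rw [h1, h2]; ring

lemma imbalance_arcDec {n : ℕ} (A : Fin n → Fin n → ℕ) (a b : Fin n) (h : 1 ≤ A a b) (v : Fin n) :
    imbalance (arcDec A a b) v =
      imbalance A v - (if v = a then 1 else 0) + (if v = b then 1 else 0) := by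
  unfold imbalance
  simp only [arcDec_apply A a b _ _ h, Finset.sum_sub_distrib]
  have h1 : ∑ j, (if v = a ∧ j = b then (1:ℤ) else 0) = if v = a then 1 else 0 := by
    by_cases h : v = a <;> simp [h]
  have h2 : ∑ j, (if j = a ∧ v = b then (1:ℤ) else 0) = if v = b then 1 else 0 := by
    by_cases h : v = b <;> simp [h]
  rw [h1, h2]; ring

lemma arcDec_isR {n r : ℕ} {A : Fin n → Fin n → ℕ} (hA : IsRDigraph n r A)
    (a b : Fin n) (hab : a ≠ b) : IsRDigraph n r (arcDec A a b) := by
  obtain ⟨hl, hc⟩ := hA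
  constructor
  · intro i; unfold arcDec; split_ifs with h
    · have := hl i; omega
    · exact hl i
  · intro i j hij
    have := hc i j hij
    unfold arcDec; split_ifs <;> omega

lemma arcInc_isR {n r : ℕ} {A : Fin n → Fin n → ℕ} (hA : IsRDigraph n r A)
    (a b : Fin n) (hab : a ≠ b) (hcap : A a b + A b a < r) :
    IsRDigraph n r (arcInc A a b) := by
  obtain ⟨hl, hc⟩ := hA
  constructor
  · intro i; unfold arcInc; split_ifs with h
    · exact absurd (h.1.symm.trans h.2) hab
    · exact hl i
  · intro i j hij
    have hcij := hc i j hij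
    unfold arcInc
    by_cases h1 : i = a ∧ j = b
    · obtain ⟨rfl, rfl⟩ := h1
      have h2 : ¬ (j = i ∧ i = j) := by rintro ⟨rfl, -⟩; exact hij rfl
      rw [if_pos ⟨rfl, rfl⟩, if_neg h2]; omega
    · by_cases h2 : j = a ∧ i = b
      · obtain ⟨rfl, rfl⟩ := h2
        rw [if_neg h1, if_pos ⟨rfl, rfl⟩]; omega
      · rw [if_neg h1, if_neg h2]; omega

lemma switch_step {n r : ℕ} (hr : 1 ≤ r) {A : Fin n → Fin n → ℕ}
    (hA : IsRDigraph n r A) {u w : Fin n} (huw : u ≠ w)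
    (hgap : imbalance A w + 1 < imbalance A u) :
    ∃ A', IsRDigraph n r A' ∧
      ∀ v, imbalance A' v =
        imbalance A v - (if v = u then 1 else 0) + (if v = w then 1 else 0) := by
  by_cases h1 : 1 ≤ A u w
  · exact ⟨arcDec A u w, arcDec_isR hA u w huw, imbalance_arcDec A u w h1⟩
  by_cases h2 : A w u + A u w < r
  · refine ⟨arcInc A w u, arcInc_isR hA w u huw.symm h2, fun v => ?_⟩
    rw [imbalance_arcInc]; ring
  -- now A u w = 0 and A w u = r
  have hAuw : A u w = 0 := by omega
  have hc := hA.2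
  have hAwu : A w u = r := by have := hc w u huw.symm; omega
  -- find intermediate vertex p
  have hkey : ∑ p ∈ (univ \ {u, w} : Finset (Fin n)),
      ((A u p : ℤ) - A p u - (A w p : ℤ) + A p w) =
      imbalance A u - imbalance A w + 2 * r := by
    have hsplit : ∀ f : Fin n → ℤ, ∑ p ∈ (univ \ {u, w} : Finset (Fin n)), f p =
        (∑ p, f p) - f u - f w := by
      intro f
      have h : ({u, w} : Finset (Fin n)) ⊆ univ := subset_univ _
      rw [Finset.sum_sdiff_eq_sub h, Finset.sum_pair huw]
      ring
    rw [hsplit]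
    simp only [imbalance, hA.1 u, hA.1 w, hAuw, hAwu]
    push_cast
    rw [Finset.sum_add_distrib, Finset.sum_sub_distrib, Finset.sum_sub_distrib]
    ring
  have hpos : (0:ℤ) < ∑ p ∈ (univ \ {u, w} : Finset (Fin n)),
      ((A u p : ℤ) - A p u - (A w p : ℤ) + A p w) := by
    rw [hkey]
    have : (1:ℤ) ≤ r := by exact_mod_cast hr
    omega
  obtain ⟨p, hp, hpgt⟩ : ∃ p ∈ (univ \ {u, w} : Finset (Fin n)),
      (0:ℤ) < (A u p : ℤ) - A p u - (A w p : ℤ) + A p w := by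
    by_contra hcon
    push_neg at hcon
    have := Finset.sum_nonpos hcon
    omega
  simp only [Finset.mem_sdiff, Finset.mem_insert, Finset.mem_singleton, mem_univ,
    true_and] at hp
  push_neg at hp
  obtain ⟨hpu, hpw⟩ := hp
  have hineq : (A w p : ℤ) - A p w < (A u p : ℤ) - A p u := by omega
  have hcup := hc u p (Ne.symm hpu)
  have hcpw := hc p w hpw
  have hcwp := hc w p (fun h => hpw h.symm)
  by_cases g1 : 1 ≤ A u p
  · -- remove arc u → p
    have hD1 := arcDec_isR hA u p (Ne.symm hpu)
    have e1 : ∀ i j, ¬(i = u ∧ j = p) → arcDec A u p i j = A i j := by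
      intro i j h; unfold arcDec; rw [if_neg h]
    by_cases g2 : 1 ≤ A p w
    · -- also remove arc p → w
      have e2 : arcDec A u p p w = A p w := e1 p w (by rintro ⟨rfl, -⟩; exact hpu rfl)
      refine ⟨arcDec (arcDec A u p) p w, arcDec_isR hD1 p w hpw, fun v => ?_⟩
      rw [imbalance_arcDec _ _ _ (by omega), imbalance_arcDec _ _ _ g1]
      by_cases hv : v = p
      · subst hv; simp [Ne.symm hpu, hpw]
      · simp only [if_neg hv]; ring
    · -- add arc w → p
      have g2' : A p w = 0 := by omega
      have hcap2 : arcDec A u p w p + arcDec A u p p w < r := by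
        rw [e1 w p (by rintro ⟨rfl, -⟩; exact huw rfl),
            e1 p w (by rintro ⟨rfl, -⟩; exact hpu rfl)]
        omega
      refine ⟨arcInc (arcDec A u p) w p, arcInc_isR hD1 w p (fun h => hpw h.symm) hcap2,
        fun v => ?_⟩
      rw [imbalance_arcInc, imbalance_arcDec _ _ _ g1]
      by_cases hv : v = p
      · subst hv; simp [Ne.symm hpu, hpw]
      · simp only [if_neg hv]; ring
  · -- A u p = 0
    have g1' : A u p = 0 := by omega
    by_cases g3 : A p u + A u p < r
    · -- add arc p → u
      have hI1 := arcInc_isR hA p u hpu g3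
      have e1 : ∀ i j, ¬(i = p ∧ j = u) → arcInc A p u i j = A i j := by
        intro i j h; unfold arcInc; rw [if_neg h]
      have g4 : 1 ≤ A p w := by omega
      have e2 : arcInc A p u p w = A p w := e1 p w (by rintro ⟨-, rfl⟩; exact huw rfl)
      refine ⟨arcDec (arcInc A p u) p w, arcDec_isR hI1 p w hpw, fun v => ?_⟩
      rw [imbalance_arcDec _ _ _ (by omega), imbalance_arcInc]
      by_cases hv : v = p
      · subst hv; simp [Ne.symm hpu, hpw]; ring
      · simp only [if_neg hv]; ring
    · -- A p u = r : contradiction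
      exfalso
      have : A p u = r := by omega
      have : (r:ℤ) ≤ (A u p : ℤ) - A p u - 1 + 1 := by omega
      omega

set_option maxHeartbeats 1000000 in
/-- Arc-switching step: if an r-digraph has non-decreasing imbalance sequence b with
$b_n > b_1 + 1$, then there is an r-digraph on the same vertex set whose imbalance
sequence (after re-sorting) is $b_1 + 1, b_2, \dots, b_{n-1}, b_n - 1$. -/
theorem stmt17 (n r : ℕ) (hn : 2 ≤ n) (hr : 1 ≤ r) (b : Fin n → ℤ) (hmono : Monotone b)
    (A : Fin n → Fin n → ℕ) (hA : IsImbalanceSeq n r A b)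
    (hgap : b ⟨0, by omega⟩ + 1 < b ⟨n - 1, by omega⟩) :
    ∃ A' : Fin n → Fin n → ℕ,
      IsImbalanceSeq n r A'
        (Function.update (Function.update b ⟨0, by omega⟩ (b ⟨0, by omega⟩ + 1))
          ⟨n - 1, by omega⟩ (b ⟨n - 1, by omega⟩ - 1)) := by
  obtain ⟨hR, σ, hσ⟩ := hA
  set i0 : Fin n := ⟨0, by omega⟩ with hi0
  set i1 : Fin n := ⟨n - 1, by omega⟩ with hi1
  have hi01 : i0 ≠ i1 := by
    simp only [hi0, hi1, Fin.mk.injEq, ne_eq]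
    omega
  set u : Fin n := σ i1 with hu
  set w : Fin n := σ i0 with hw
  have huw : u ≠ w := fun h => hi01 (σ.injective h.symm)
  have hgap' : imbalance A w + 1 < imbalance A u := by
    rw [← hσ i0, ← hσ i1]; exact hgap
  obtain ⟨A', hA'R, hA'⟩ := switch_step hr hR huw hgap'
  refine ⟨A', hA'R, σ, fun i => ?_⟩
  rw [hA' (σ i)]
  by_cases h1 : i = i1
  · subst h1
    rw [Function.update_self]
    simp only [← hu, if_pos rfl, if_neg huw]
    rw [hσ i1]; simp; rfl
  · rw [Function.update_of_ne h1]
    by_cases h0 : i = i0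
    · subst h0
      rw [Function.update_self]
      simp only [← hw, if_neg (Ne.symm huw), if_pos rfl]
      rw [hσ i0]; simp; rfl
    · rw [Function.update_of_ne h0, hσ i]
      have hu' : σ i ≠ u := fun h => h1 (σ.injective h)
      have hw' : σ i ≠ w := fun h => h0 (σ.injective h)
      rw [if_neg hu', if_neg hw']; ring
end
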